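/- If R is a weakly strongly 2-nil-clean ring in which 6 is nilpotent, then R is strongly 2-nil-clean. -/

import Mathlib

section KeyComm

variable {A : Type*} [CommRing A]

private lemma nilpAdd {x y : A} (hx : IsNilpotent x) (hy : IsNilpotent y) :
    IsNilpotent (x + y) := Commute.isNilpotent_add (Commute.all _ _) hx hy

private lemma nilpMul (x : A) {y : A} (hy : IsNilpotent y) : IsNilpotent (x * y) :=
  by rw [mul_comm]; exact (Commute.all y x).isNilpotent_mul_right hy

private lemma mixIdem {p q c : A} (hp : p * p = p) (hq : q * q = q) (hc : c * c = c) :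
    (p * c + q * (1 - c)) * (p * c + q * (1 - c)) = p * c + q * (1 - c) := by
  linear_combination (c * c) * hp + ((1 - c) * (1 - c)) * hq + (p + q - 2 * p * q) * hc

private lemma key (h6 : IsNilpotent (6 : A)) {e f n : A}
    (he : e * e = e) (hf : f * f = f) (hn : IsNilpotent n) {a : A}
    (ha : a = e + f + n ∨ a = e - f + n ∨ a = -e + f + n ∨ a = -e - f + n) :
    ∃ E F N : A, E * E = E ∧ F * F = F ∧ IsNilpotent N ∧ a = E + F + N := by
  obtain ⟨k0, hk0⟩ := h6
  set K := k0 + 1 with hK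
  have hk : (6 : A) ^ K = 0 := by rw [hK, pow_succ, hk0, zero_mul]
  have hcop : IsCoprime ((2 : ℤ) ^ K) ((3 : ℤ) ^ K) :=
    IsCoprime.pow (Int.isCoprime_iff_gcd_eq_one.mpr (by decide))
  obtain ⟨x, y, hxy⟩ := hcop
  have h6Z : ∀ m : ℤ, ((6 ^ K * m : ℤ) : A) = 0 := by
    intro m; push_cast; rw [hk, zero_mul]
  set c : A := ((y * 3 ^ K : ℤ) : A) with hcdef
  set d : A := ((x * 2 ^ K : ℤ) : A) with hddef
  have hcd : c + d = 1 := by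
    rw [hcdef, hddef, ← Int.cast_add, show y * 3 ^ K + x * 2 ^ K = 1 by linarith, Int.cast_one]
  have hcd0 : c * d = 0 := by
    rw [hcdef, hddef, ← Int.cast_mul]
    have : (y * 3 ^ K) * (x * 2 ^ K) = (6 : ℤ) ^ K * (x * y) := by
      rw [show (6 : ℤ) = 2 * 3 by norm_num, mul_pow]; ring
    rw [this]; exact h6Z _
  have hc : c * c = c := by linear_combination c * hcd - hcd0
  have hd : d = 1 - c := by linear_combination hcd
  have hcK : c ^ K = c := IsIdempotentElem.pow_succ_eq k0 hc
  have h2c : IsNilpotent ((2 : A) * c) := by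
    refine ⟨K, ?_⟩
    rw [mul_pow, hcK]
    have : (2 : A) ^ K * c = ((6 ^ K * y : ℤ) : A) := by
      rw [hcdef]; push_cast
      rw [show ((6 : A)) = 2 * 3 by norm_num, mul_pow]; ring
    rw [this, h6Z]
  have hd' : (1 - c) * (1 - c) = 1 - c := by linear_combination hc
  have hdK : (1 - c) ^ K = 1 - c := IsIdempotentElem.pow_succ_eq k0 hd'
  have h3d : IsNilpotent ((3 : A) * (1 - c)) := by
    refine ⟨K, ?_⟩
    rw [mul_pow, hdK, ← hd]
    have : (3 : A) ^ K * d = ((6 ^ K * x : ℤ) : A) := by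
      rw [hddef]; push_cast
      rw [show ((6 : A)) = 2 * 3 by norm_num, mul_pow]; ring
    rw [this, h6Z]
  rcases ha with ha | ha | ha | ha
  · exact ⟨e, f, n, he, hf, hn, ha⟩
  · refine ⟨e * c + (e + f - 2 * (e * f)) * (1 - c),
      f * c + (f - e * f) * (1 - c),
      n + (-f) * ((2 : A) * c) + (-(f - e * f)) * ((3 : A) * (1 - c)),
      mixIdem he ?_ hc, mixIdem hf ?_ hc, ?_, by rw [ha]; ring⟩
    · linear_combination (1 + 4 * f * f - 4 * f) * he + hf
    · linear_combination (f * f) * he + (1 - e) * hf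
    · exact nilpAdd (nilpAdd hn (nilpMul _ h2c)) (nilpMul _ h3d)
  · refine ⟨e * c + (e + f - 2 * (e * f)) * (1 - c),
      f * c + (e - e * f) * (1 - c),
      n + (-e) * ((2 : A) * c) + (-(e - e * f)) * ((3 : A) * (1 - c)),
      mixIdem he ?_ hc, mixIdem hf ?_ hc, ?_, by rw [ha]; ring⟩
    · linear_combination (1 + 4 * f * f - 4 * f) * he + hf
    · linear_combination (e * e) * hf + (1 - f) * he
    · exact nilpAdd (nilpAdd hn (nilpMul _ h2c)) (nilpMul _ h3d)
  · refine ⟨e * c + (e + f - e * f) * (1 - c),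
      f * c + (e + f - 2 * (e * f)) * (1 - c),
      n + (-(e + f)) * ((2 : A) * c) + (-(e + f - e * f)) * ((3 : A) * (1 - c)),
      mixIdem he ?_ hc, mixIdem hf ?_ hc, ?_, by rw [ha]; ring⟩
    · linear_combination (1 + f * f - 2 * f) * he + (1 - e) * hf
    · linear_combination (1 + 4 * f * f - 4 * f) * he + hf
    · exact nilpAdd (nilpAdd hn (nilpMul _ h2c)) (nilpMul _ h3d)

end KeyComm

/-- A ring is weakly strongly 2-nil-clean if every element is `±e ± f + n` with
`e, f` idempotents and `n` nilpotent, all commuting with each other. -/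
def IsWeaklyStrongly2NilClean (R : Type*) [Ring R] : Prop :=
  ∀ a : R, ∃ e f n : R, IsIdempotentElem e ∧ IsIdempotentElem f ∧ IsNilpotent n ∧
    Commute e f ∧ Commute e n ∧ Commute f n ∧
    (a = e + f + n ∨ a = e - f + n ∨ a = -e + f + n ∨ a = -e - f + n)

/-- A ring is strongly 2-nil-clean if every element is `e + f + n` with
`e, f` idempotents and `n` nilpotent, all commuting with each other. -/
def IsStrongly2NilClean (R : Type*) [Ring R] : Prop :=
  ∀ a : R, ∃ e f n : R, IsIdempotentElem e ∧ IsIdempotentElem f ∧ IsNilpotent n ∧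
    Commute e f ∧ Commute e n ∧ Commute f n ∧ a = e + f + n

theorem strongly2NilClean_of_wsnc_six_nilpotent {R : Type*} [Ring R]
    (hR : IsWeaklyStrongly2NilClean R) (h6 : IsNilpotent (6 : R)) :
    IsStrongly2NilClean R := by
  intro a
  obtain ⟨e, f, n, he, hf, hn, hef, hen, hfn, hcases⟩ := hR a
  set s : Set R := {e, f, n} with hs
  have hcomm : ∀ x ∈ s, ∀ y ∈ s, x * y = y * x := by
    rintro x (rfl | rfl | rfl) z (rfl | rfl | rfl)
    · rfl
    · exact hef.eq
    · exact hen.eq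
    · exact hef.symm.eq
    · rfl
    · exact hfn.eq
    · exact hen.symm.eq
    · exact hfn.symm.eq
    · rfl
  set S := Subring.closure s with hS
  letI : CommRing S := Subring.closureCommRingOfComm hcomm
  have heS : e ∈ S := Subring.subset_closure (by simp [hs])
  have hfS : f ∈ S := Subring.subset_closure (by simp [hs])
  have hnS : n ∈ S := Subring.subset_closure (by simp [hs])
  have haS : a ∈ S := by
    rcases hcases with h | h | h | h <;> rw [h]
    · exact add_mem (add_mem heS hfS) hnS
    · exact add_mem (sub_mem heS hfS) hnS
    · exact add_mem (add_mem (neg_mem heS) hfS) hnS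
    · exact add_mem (sub_mem (neg_mem heS) hfS) hnS
  have h6S : IsNilpotent (6 : S) := by
    obtain ⟨m, hm⟩ := h6
    refine ⟨m, ?_⟩
    have h61 : ((6 : S) : R) = (6 : R) := by
      rw [show (6 : S) = ((6 : ℕ) : S) by norm_cast, SubringClass.coe_natCast]; norm_num
    have : (((6 : S) ^ m : S) : R) = (6 : R) ^ m := by rw [SubmonoidClass.coe_pow, h61]
    exact Subtype.ext (by rw [this, hm]; rfl)
  have he' : (⟨e, heS⟩ : S) * ⟨e, heS⟩ = ⟨e, heS⟩ := Subtype.ext he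
  have hf' : (⟨f, hfS⟩ : S) * ⟨f, hfS⟩ = ⟨f, hfS⟩ := Subtype.ext hf
  have hn' : IsNilpotent (⟨n, hnS⟩ : S) := by
    obtain ⟨m, hm⟩ := hn
    refine ⟨m, Subtype.ext ?_⟩
    have : (((⟨n, hnS⟩ : S) ^ m : S) : R) = n ^ m := by rw [SubmonoidClass.coe_pow]
    rw [this, hm]; rfl
  have ha' : (⟨a, haS⟩ : S) = ⟨e, heS⟩ + ⟨f, hfS⟩ + ⟨n, hnS⟩ ∨
      (⟨a, haS⟩ : S) = ⟨e, heS⟩ - ⟨f, hfS⟩ + ⟨n, hnS⟩ ∨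
      (⟨a, haS⟩ : S) = -⟨e, heS⟩ + ⟨f, hfS⟩ + ⟨n, hnS⟩ ∨
      (⟨a, haS⟩ : S) = -⟨e, heS⟩ - ⟨f, hfS⟩ + ⟨n, hnS⟩ := by
    rcases hcases with h | h | h | h
    · exact Or.inl (Subtype.ext h)
    · exact Or.inr (Or.inl (Subtype.ext h))
    · exact Or.inr (Or.inr (Or.inl (Subtype.ext h)))
    · exact Or.inr (Or.inr (Or.inr (Subtype.ext h)))
  obtain ⟨E, F, N, hE, hF, hN, heq⟩ := key h6S he' hf' hn' ha'
  refine ⟨(E : R), (F : R), (N : R), ?_, ?_, ?_, ?_, ?_, ?_, ?_⟩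
  · show (E : R) * E = E
    rw [← MulMemClass.coe_mul, hE]
  · show (F : R) * F = F
    rw [← MulMemClass.coe_mul, hF]
  · exact hN.map S.subtype
  · show (E : R) * F = (F : R) * E
    rw [← MulMemClass.coe_mul, ← MulMemClass.coe_mul, mul_comm]
  · show (E : R) * N = (N : R) * E
    rw [← MulMemClass.coe_mul, ← MulMemClass.coe_mul, mul_comm]
  · show (F : R) * N = (N : R) * F
    rw [← MulMemClass.coe_mul, ← MulMemClass.coe_mul, mul_comm]
  · have := congrArg (Subtype.val : S → R) heq
    push_cast at this
    exact this
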